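/- Assume n + n' is even and τ ≥ 0. Let Λ ∈ S_{n,δ} with Υ(Λ) = (μ;ν), ν = (ν_1, …, ν_{m_2}), and let Λ'_0 ∈ S_{n',δ'} be the class with Υ(Λ'_0) = ((ν_1 + τ, ν_2, …, ν_{m_2}); μ). Then Λ'_0 ∈ Θ(Λ)_0, and Λ'_0 ∉ Θ(Λ'') for every Λ'' ∈ S_{n,δ} with Λ'' < Λ. -/

import Mathlib

namespace PanUnitary

/-- `part μ i` : the `i`-th largest element (0-indexed) of the multiset `μ`, `0` beyond.
Viewing a multiset of naturals as a partition (identified up to trailing zeros),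
this is the `(i+1)`-st part. -/
def part (μ : Multiset ℕ) (i : ℕ) : ℕ := ((μ.sort (· ≤ ·)).reverse).getD i 0

/-- Remove the zero parts: the canonical (zero-free) representative of a partition. -/
def strip (μ : Multiset ℕ) : Multiset ℕ := μ.filter (fun x => 0 < x)

/-- `transpose μ j` is the `(j+1)`-st part of the transposed (conjugate) partition. -/
def transpose (μ : Multiset ℕ) (j : ℕ) : ℕ := (μ.filter (fun x => j < x)).card

/-- `Preceq f g` : the partition whose parts are given by `f` is `⪯` the one given by `g`,
i.e. `g i - 1 ≤ f i ≤ g i` for all `i`. -/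
def Preceq (f g : ℕ → ℕ) : Prop := ∀ i, g i ≤ f i + 1 ∧ f i ≤ g i

/-- An integer `δ` is admissible if it is even and nonnegative, or odd and negative. -/
def IsAdmissible (δ : ℤ) : Prop := (Even δ ∧ 0 ≤ δ) ∨ (Odd δ ∧ δ < 0)

/-- `ε = 1` if `δ` is even, `ε = 0` if `δ` is odd. -/
def eps (δ : ℤ) : ℕ := if Even δ then 1 else 0

/-- `d (d + 1) / 2` where `d = |δ|`. -/
def halfTri (δ : ℤ) : ℕ := δ.natAbs * (δ.natAbs + 1) / 2

/-- A symbol: a pair of rows of natural numbers (the strict-decrease condition is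
part of the predicate `Symbol.IsUnitary`). -/
structure Symbol where
  A : List ℕ
  B : List ℕ

def Symbol.defect (Λ : Symbol) : ℤ := (Λ.A.length : ℤ) - (Λ.B.length : ℤ)

/-- The row `(a_1, …, a_m)` gives the partition with parts `(a_i - e)/2 - (m - i)`. -/
def upsRow (L : List ℕ) (e : ℕ) : Multiset ℕ :=
  ((L.mapIdx fun i a => (a - e) / 2 - (L.length - 1 - i) : List ℕ) : Multiset ℕ)

/-- The bipartition `Υ(Λ)` (canonical zero-free representatives). -/
def Symbol.Upsilon (Λ : Symbol) : Multiset ℕ × Multiset ℕ :=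
  (strip (upsRow Λ.A (eps Λ.defect)), strip (upsRow Λ.B (1 - eps Λ.defect)))

/-- `Λ` is a unitary-type symbol of (admissible) defect `δ`. -/
def Symbol.IsUnitary (Λ : Symbol) (δ : ℤ) : Prop :=
  Λ.A.Pairwise (· > ·) ∧ Λ.B.Pairwise (· > ·) ∧ Λ.defect = δ ∧
    (∀ a ∈ Λ.A, a % 2 = eps δ) ∧ (∀ b ∈ Λ.B, b % 2 = 1 - eps δ)

/-- The rank `2(|μ| + |ν|) + d(d+1)/2` of a unitary-type symbol. -/
def Symbol.rank (Λ : Symbol) : ℕ :=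
  2 * (Λ.Upsilon.1.sum + Λ.Upsilon.2.sum) + halfTri Λ.defect

/-- Equivalence of symbols: same defect and same `Υ`. -/
def Symbol.Equiv (Λ Λ' : Symbol) : Prop :=
  Λ.defect = Λ'.defect ∧ Λ.Upsilon = Λ'.Upsilon

/-- Membership in `S_{n,δ}`: a unitary-type symbol of admissible defect `δ` and rank `n`. -/
def InS (n : ℕ) (δ : ℤ) (Λ : Symbol) : Prop :=
  IsAdmissible δ ∧ Λ.IsUnitary δ ∧ Λ.rank = n

/-- `Σ min(x,y)` over all unordered pairs of (positions of) entries of the list. -/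
def pairMinSum : List ℕ → ℕ
  | [] => 0
  | x :: xs => (xs.map (fun y => min x y)).sum + pairMinSum xs

/-- All entries of a symbol (both rows). -/
def Symbol.entries (Λ : Symbol) : List ℕ := Λ.A ++ Λ.B

/-- `ord(Λ) = Σ min(x,y) − Σ_{i=1}^{⌊N/2⌋} (N − 2i)²`. -/
def Symbol.ord (Λ : Symbol) : ℤ :=
  (pairMinSum Λ.entries : ℤ) -
    ∑ i ∈ Finset.Icc 1 (Λ.entries.length / 2),
      ((Λ.entries.length : ℤ) - 2 * (i : ℤ)) ^ 2

/-- The shift of a unitary-type symbol. -/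
def Symbol.shift (Λ : Symbol) : Symbol :=
  ⟨Λ.A.map (fun a => a + 2) ++ [eps Λ.defect],
   Λ.B.map (fun b => b + 2) ++ [1 - eps Λ.defect]⟩

/-- The defect `δ'` for the second member of the dual pair. -/
def deltaPrime (n n' : ℕ) (δ : ℤ) : ℤ :=
  if Even (n + n') then (if δ = 0 then 0 else -δ + 1) else -δ - 1

/-- `τ = ((n' − d'(d'+1)/2) − (n − d(d+1)/2)) / 2`. -/
def tau (n n' : ℕ) (δ : ℤ) : ℚ :=
  (((n' : ℚ) - (halfTri (deltaPrime n n' δ) : ℚ)) - ((n : ℚ) - (halfTri δ : ℚ))) / 2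

/-- `τ` as a natural number (equal to `τ` whenever `τ` is a nonnegative integer). -/
def tauNat (n n' : ℕ) (δ : ℤ) : ℕ :=
  ((n' + halfTri δ) - (n + halfTri (deltaPrime n n' δ))) / 2

/-- The set of (canonical, zero-free) bipartitions `(μ;ν)` with
`2(|μ|+|ν|) + d(d+1)/2 = n`; equivalently `|μ|+|ν| = (n − d(d+1)/2)/2`. -/
def BipSet (n : ℕ) (δ : ℤ) : Set (Multiset ℕ × Multiset ℕ) :=
  {p | (∀ x ∈ p.1, 0 < x) ∧ (∀ x ∈ p.2, 0 < x) ∧ 2 * (p.1.sum + p.2.sum) + halfTri δ = n}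

/-- The `⪯`-conditions (on transposes) defining the relation `Θ`, at the level of
bipartitions `p = Υ(Λ)`, `q = Υ(Λ')`. -/
def PrecCond (n n' : ℕ) (p q : Multiset ℕ × Multiset ℕ) : Prop :=
  if Even (n + n') then
    Preceq (transpose p.2) (transpose q.1) ∧ Preceq (transpose q.2) (transpose p.1)
  else
    Preceq (transpose p.1) (transpose q.2) ∧ Preceq (transpose q.1) (transpose p.2)

/-- `Θ` at the level of bipartitions (classes of symbols). -/
def ThetaB (n n' : ℕ) (δ : ℤ) (p q : Multiset ℕ × Multiset ℕ) : Prop :=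
  q ∈ BipSet n' (deltaPrime n n' δ) ∧ PrecCond n n' p q

/-- `Λ' ∈ Θ(Λ)` for symbols, where `Λ ∈ S_{n,δ}`. -/
def InTheta (n n' : ℕ) (δ : ℤ) (Λ Λ' : Symbol) : Prop :=
  InS n' (deltaPrime n n' δ) Λ' ∧ PrecCond n n' Λ.Upsilon Λ'.Upsilon

/-- `Λ' ∈ Θ(Λ)_k`. -/
def InThetaK (n n' : ℕ) (δ : ℤ) (k : ℕ) (Λ Λ' : Symbol) : Prop :=
  InTheta n n' δ Λ Λ' ∧
    (if Even (n + n') then (Λ'.Upsilon.2.sum : ℤ) = (Λ.Upsilon.1.sum : ℤ) - (k : ℤ)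
     else (Λ'.Upsilon.1.sum : ℤ) = (Λ.Upsilon.2.sum : ℤ) - (k : ℤ))

/-- Remove (one copy of) the largest part. -/
def mtail (μ : Multiset ℕ) : Multiset ℕ := μ.erase (part μ 0)

/-- `θ_k` at the level of bipartitions:
even case: `(μ;ν) ↦ (sort(ν, τ+k); sort(μ_2, …, μ_{m_1}, μ_1 − k))`;
odd case: `(μ;ν) ↦ (sort(ν_2, …, ν_{m_2}, ν_1 − k); sort(μ, τ+k))`. -/
def thetaBip (n n' : ℕ) (δ : ℤ) (k : ℕ) (p : Multiset ℕ × Multiset ℕ) :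
    Multiset ℕ × Multiset ℕ :=
  if Even (n + n') then
    (strip ((tauNat n n' δ + k) ::ₘ p.2), strip ((part p.1 0 - k) ::ₘ mtail p.1))
  else
    (strip ((part p.2 0 - k) ::ₘ mtail p.2), strip ((tauNat n n' δ + k) ::ₘ p.1))

/-- The unitary-type symbol of defect `δ` with `Υ = p`, whose first row has `m1`
entries and second row `m2` entries (valid whenever `m1, m2` are large enough). -/
def symbolOfBip (δ : ℤ) (p : Multiset ℕ × Multiset ℕ) (m1 m2 : ℕ) : Symbol :=
  ⟨List.ofFn (fun i : Fin m1 => 2 * (part p.1 (i : ℕ) + (m1 - 1 - (i : ℕ))) + eps δ),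
   List.ofFn (fun j : Fin m2 => 2 * (part p.2 (j : ℕ) + (m2 - 1 - (j : ℕ))) + (1 - eps δ))⟩

/-- A canonical representative symbol of defect `δ` with `Υ = p`. -/
def canonicalSymbol (δ : ℤ) (p : Multiset ℕ × Multiset ℕ) : Symbol :=
  symbolOfBip δ p (max p.1.card ((p.2.card : ℤ) + δ).toNat)
    (((max p.1.card ((p.2.card : ℤ) + δ).toNat : ℤ) - δ).toNat)

/-- A symbol representing the class `θ_k(Λ)`. -/
def thetaSymbol (n n' : ℕ) (δ : ℤ) (k : ℕ) (Λ : Symbol) : Symbol :=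
  canonicalSymbol (deltaPrime n n' δ) (thetaBip n n' δ k Λ.Upsilon)

/-- `K(Λ)`: `μ_1` in the even case, `ν_1` in the odd case. -/
def bigK (n n' : ℕ) (Λ : Symbol) : ℕ :=
  if Even (n + n') then part Λ.Upsilon.1 0 else part Λ.Upsilon.2 0

/-- `ord` at the level of bipartitions (well defined on classes). -/
def ordB (δ : ℤ) (p : Multiset ℕ × Multiset ℕ) : ℤ := (canonicalSymbol δ p).ord

/-- Strict lexicographic order on partitions. -/
def PartLexLt (μ ν : Multiset ℕ) : Prop :=
  ∃ i, (∀ j < i, part μ j = part ν j) ∧ part μ i < part ν i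

/-- The total order on `S_{n,δ}` (and on `S_{n',δ'}`), at the level of bipartitions;
it depends only on the parity of `n + n'`. -/
def BLt (n n' : ℕ) (p q : Multiset ℕ × Multiset ℕ) : Prop :=
  if Even (n + n') then
    p.1.sum < q.1.sum ∨ (p.1.sum = q.1.sum ∧ PartLexLt p.1 q.1) ∨
      (p.1 = q.1 ∧ PartLexLt p.2 q.2)
  else
    p.2.sum < q.2.sum ∨ (p.2.sum = q.2.sum ∧ PartLexLt p.2 q.2) ∨
      (p.2 = q.2 ∧ PartLexLt p.1 q.1)

/-- `q ∈ Θ♭(p)` relative to a given partial function `bar` (playing the role of `θ̄`). -/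
def InFlat (n n' : ℕ) (δ : ℤ)
    (bar : Multiset ℕ × Multiset ℕ → Option (Multiset ℕ × Multiset ℕ))
    (p q : Multiset ℕ × Multiset ℕ) : Prop :=
  ThetaB n n' δ p q ∧ ∀ r ∈ BipSet n δ, BLt n n' r p → bar r ≠ some q

/-- `bar` is the partial function `θ̄` defined by recursion along the total order:
on each `p ∈ S_{n,δ}`, if `Θ♭(p) ≠ ∅` then `bar p` is defined and is the smallest
element (w.r.t. the total order) of maximal `ord` in `Θ♭(p)`. -/
def IsThetaBar (n n' : ℕ) (δ : ℤ)
    (bar : Multiset ℕ × Multiset ℕ → Option (Multiset ℕ × Multiset ℕ)) : Prop :=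
  (∀ p, p ∉ BipSet n δ → bar p = none) ∧
  ∀ p ∈ BipSet n δ,
    ((∃ q, InFlat n n' δ bar p q) → ∃ q, bar p = some q) ∧
    ∀ q, bar p = some q →
      InFlat n n' δ bar p q ∧
      (∀ r, InFlat n n' δ bar p r →
        ordB (deltaPrime n n' δ) r ≤ ordB (deltaPrime n n' δ) q) ∧
      (∀ r, InFlat n n' δ bar p r →
        ordB (deltaPrime n n' δ) r = ordB (deltaPrime n n' δ) q → r ≠ q → BLt n n' q r)



/-! ### Auxiliary lemmas -/

lemma strip_sum (μ : Multiset ℕ) : (strip μ).sum = μ.sum := by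
  rw [strip]
  induction μ using Multiset.induction with
  | empty => simp
  | cons a s ih =>
    rw [Multiset.filter_cons]
    split_ifs with h
    · simp [ih]
    · simp only [Multiset.sum_cons, zero_add, ih]
      omega

lemma strip_pos (μ : Multiset ℕ) : ∀ x ∈ strip μ, 0 < x := by
  intro x hx
  exact (Multiset.mem_filter.mp hx).2

lemma transpose_strip (μ : Multiset ℕ) (j : ℕ) : transpose (strip μ) j = transpose μ j := by
  rw [transpose, transpose, strip, Multiset.filter_filter]
  congr 1
  apply Multiset.filter_congr
  intro x _
  constructor
  · rintro ⟨h, _⟩; exact h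
  · intro h; exact ⟨h, Nat.lt_of_le_of_lt (Nat.zero_le j) h⟩

lemma transpose_cons (a : ℕ) (s : Multiset ℕ) (j : ℕ) :
    transpose (a ::ₘ s) j = (if j < a then 1 else 0) + transpose s j := by
  rw [transpose, transpose, Multiset.filter_cons]
  split_ifs with h <;> simp [Nat.add_comm]

lemma transpose_zero (j : ℕ) : transpose (0 : Multiset ℕ) j = 0 := rfl

lemma part_zero (i : ℕ) : part (0 : Multiset ℕ) i = 0 := by simp [part]

lemma mtail_zero : mtail (0 : Multiset ℕ) = 0 := rfl

lemma part0_mem (μ : Multiset ℕ) (h : μ ≠ 0) : part μ 0 ∈ μ := by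
  have hlen : 0 < (μ.sort (· ≤ ·)).reverse.length := by
    rw [List.length_reverse, Multiset.length_sort]
    exact Multiset.card_pos.mpr h
  rw [part, List.getD_eq_getElem _ _ hlen]
  have := List.getElem_mem hlen
  rw [List.mem_reverse] at this
  exact (Multiset.mem_sort _).mp this

lemma le_part0 (μ : Multiset ℕ) (x : ℕ) (hx : x ∈ μ) : x ≤ part μ 0 := by
  set l := μ.sort (· ≤ ·) with hl
  have hxl : x ∈ l := (Multiset.mem_sort _).mpr hx
  obtain ⟨i, hix⟩ := List.mem_iff_get.mp hxl
  have hlen : 0 < l.reverse.length := by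
    rw [List.length_reverse]; exact Nat.lt_of_le_of_lt (Nat.zero_le _) i.isLt
  rw [part, List.getD_eq_getElem _ _ hlen, List.getElem_reverse]
  have hs : List.Pairwise (· ≤ ·) l := Multiset.pairwise_sort _ _
  rw [List.length_reverse] at *
  rcases Nat.lt_or_ge (i : ℕ) (l.length - 1) with hlt | hge
  · have := (List.pairwise_iff_get.mp hs) i ⟨l.length - 1 - 0, by omega⟩ (by show (i : ℕ) < l.length - 1 - 0; omega)
    rw [← hix]
    simpa [List.get_eq_getElem] using this
  · have hieq : (i : ℕ) = l.length - 1 - 0 := by have := i.isLt; omega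
    rw [← hix]
    simp only [List.get_eq_getElem]
    exact le_of_eq (by congr 1)

lemma cons_mtail (μ : Multiset ℕ) (h : μ ≠ 0) : part μ 0 ::ₘ mtail μ = μ :=
  Multiset.cons_erase (part0_mem μ h)

lemma transpose_eq_zero (μ : Multiset ℕ) (j : ℕ) (h : ∀ x ∈ μ, x ≤ j) :
    transpose μ j = 0 := by
  rw [transpose, Multiset.card_eq_zero, Multiset.filter_eq_nil]
  intro x hx
  exact Nat.not_lt.mpr (h x hx)

lemma sum_transpose (μ : Multiset ℕ) (N : ℕ) (h : ∀ x ∈ μ, x ≤ N) :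
    ∑ j ∈ Finset.range N, transpose μ j = μ.sum := by
  induction μ using Multiset.induction with
  | empty => simp [transpose_zero]
  | cons a s ih =>
    have ha : a ≤ N := h a (Multiset.mem_cons_self a s)
    have hs : ∀ x ∈ s, x ≤ N := fun x hx => h x (Multiset.mem_cons_of_mem hx)
    simp only [transpose_cons, Finset.sum_add_distrib, ih hs, Multiset.sum_cons]
    congr 1
    rw [Finset.sum_boole]
    norm_cast
    have : Finset.filter (fun j => j < a) (Finset.range N) = Finset.range a := by
      apply Finset.ext
      intro j
      simp only [Finset.mem_filter, Finset.mem_range]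
      omega
    rw [this, Finset.card_range]

lemma count_formula (μ : Multiset ℕ) (k : ℕ) :
    transpose μ k = μ.count (k + 1) + transpose μ (k + 1) := by
  induction μ using Multiset.induction with
  | empty => simp [transpose_zero]
  | cons a s ih =>
    rw [transpose_cons, transpose_cons, Multiset.count_cons, ih]
    by_cases h : a = k + 1 <;> split_ifs <;> omega

lemma eq_of_transpose_eq (μ ν : Multiset ℕ) (hμ : ∀ x ∈ μ, 0 < x) (hν : ∀ x ∈ ν, 0 < x)
    (h : ∀ j, transpose μ j = transpose ν j) : μ = ν := by
  ext m
  rcases m with _ | k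
  · rw [Multiset.count_eq_zero.mpr (fun hc => lt_irrefl 0 (hμ 0 hc)),
      Multiset.count_eq_zero.mpr (fun hc => lt_irrefl 0 (hν 0 hc))]
  · have h1 := count_formula μ k
    have h2 := count_formula ν k
    rw [h k, h (k+1)] at h1
    omega

lemma eq_of_transpose_le_of_sum_eq (μ ν : Multiset ℕ) (hμ : ∀ x ∈ μ, 0 < x)
    (hν : ∀ x ∈ ν, 0 < x) (hle : ∀ j, transpose μ j ≤ transpose ν j)
    (hsum : μ.sum = ν.sum) : μ = ν := by
  set N := part μ 0 + part ν 0 with hN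
  have hbμ : ∀ x ∈ μ, x ≤ N := fun x hx => le_trans (le_part0 μ x hx) (Nat.le_add_right _ _)
  have hbν : ∀ x ∈ ν, x ≤ N := fun x hx => le_trans (le_part0 ν x hx) (Nat.le_add_left _ _)
  have hsμ := sum_transpose μ N hbμ
  have hsν := sum_transpose ν N hbν
  have heq : ∀ j ∈ Finset.range N, transpose μ j = transpose ν j := by
    rw [← Finset.sum_eq_sum_iff_of_le (fun j _ => hle j)]
    rw [hsμ, hsν, hsum]
  apply eq_of_transpose_eq μ ν hμ hν
  intro j
  rcases Nat.lt_or_ge j N with hj | hj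
  · exact heq j (Finset.mem_range.mpr hj)
  · rw [transpose_eq_zero μ j (fun x hx => le_trans (hbμ x hx) hj),
      transpose_eq_zero ν j (fun x hx => le_trans (hbν x hx) hj)]

lemma partLexLt_irrefl (μ : Multiset ℕ) : ¬ PartLexLt μ μ := by
  rintro ⟨i, _, hi⟩
  exact lt_irrefl _ hi

lemma partLexLt_part0_le {μ ν : Multiset ℕ} (h : PartLexLt μ ν) : part μ 0 ≤ part ν 0 := by
  obtain ⟨i, hj, hi⟩ := h
  rcases Nat.eq_zero_or_pos i with rfl | hpos
  · exact le_of_lt hi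
  · exact le_of_eq (hj 0 hpos)

lemma transpose_q1 (ν : Multiset ℕ) (t j : ℕ) :
    transpose (strip ((part ν 0 + t) ::ₘ mtail ν)) j
      = transpose ν j + (if part ν 0 ≤ j ∧ j < part ν 0 + t then 1 else 0) := by
  rw [transpose_strip, transpose_cons]
  rcases eq_or_ne ν 0 with rfl | h
  · simp only [part_zero, mtail_zero, transpose_zero]
    split_ifs <;> omega
  · have hh : transpose ν j = (if j < part ν 0 then 1 else 0) + transpose (mtail ν) j := by
      conv_lhs => rw [← cons_mtail ν h, transpose_cons]
    rw [hh]
    split_ifs <;> omega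

lemma q1_sum (ν : Multiset ℕ) (t : ℕ) :
    (strip ((part ν 0 + t) ::ₘ mtail ν)).sum = ν.sum + t := by
  rw [strip_sum, Multiset.sum_cons]
  rcases eq_or_ne ν 0 with rfl | h
  · simp [part_zero, mtail_zero]
  · have hh : ν.sum = part ν 0 + (mtail ν).sum := by
      conv_lhs => rw [← cons_mtail ν h, Multiset.sum_cons]
    omega

lemma sum_le_of_transpose_le (μ ν : Multiset ℕ) (h : ∀ j, transpose μ j ≤ transpose ν j) :
    μ.sum ≤ ν.sum := by
  set N := part μ 0 + part ν 0 with hN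
  rw [← sum_transpose μ N (fun x hx => le_trans (le_part0 μ x hx) (Nat.le_add_right _ _)),
    ← sum_transpose ν N (fun x hx => le_trans (le_part0 ν x hx) (Nat.le_add_left _ _))]
  exact Finset.sum_le_sum fun j _ => h j

lemma tri_succ_parity (f : ℕ) : ((2*f+1)*(2*f+2)/2) % 2 = ((2*f+2)*(2*f+3)/2) % 2 := by
  have h1 : (2*f+1)*(2*f+2) = 2*((2*f+1)*(f+1)) := by ring
  have h2 : (2*f+2)*(2*f+3) = 2*((f+1)*(2*f+3)) := by ring
  rw [h1, h2, Nat.mul_div_cancel_left _ (by norm_num), Nat.mul_div_cancel_left _ (by norm_num)]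
  have h3 : (f+1)*(2*f+3) = (2*f+1)*(f+1) + 2*(f+1) := by ring
  omega

lemma halfTri_parity (n n' : ℕ) (δ : ℤ) (hδ : IsAdmissible δ) (hpar : Even (n + n')) :
    halfTri δ % 2 = halfTri (deltaPrime n n' δ) % 2 := by
  rw [deltaPrime, if_pos hpar]
  rcases eq_or_ne δ 0 with rfl | h0
  · simp
  rw [if_neg h0]
  rcases hδ with ⟨he, hpos⟩ | ⟨ho, hneg⟩
  · obtain ⟨c, hc⟩ := he
    have hc1 : 1 ≤ c := by omega
    have h1 : δ.natAbs = 2 * (c.toNat - 1) + 2 := by omega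
    have h2 : (-δ + 1).natAbs = 2 * (c.toNat - 1) + 1 := by omega
    rw [halfTri, halfTri, h1, h2]
    exact (tri_succ_parity (c.toNat - 1)).symm
  · obtain ⟨c, hc⟩ := ho
    have hc1 : c ≤ -1 := by omega
    have h1 : δ.natAbs = 2 * (-c - 1).toNat + 1 := by omega
    have h2 : (-δ + 1).natAbs = 2 * (-c - 1).toNat + 2 := by omega
    rw [halfTri, halfTri, h1, h2]
    exact tri_succ_parity ((-c - 1).toNat)

/-- The element `Λ'₀` with `Υ(Λ'₀) = ((ν₁ + τ, ν₂, …, ν_{m₂}); μ)` lies in `Θ(Λ)_0`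
and in no `Θ(Λ'')` with `Λ'' < Λ`. -/
theorem statement11 (n n' : ℕ) (δ : ℤ) (hδ : IsAdmissible δ)
    (hpar : Even (n + n')) (hτ : 0 ≤ tau n n' δ)
    (p : Multiset ℕ × Multiset ℕ) (hp : p ∈ BipSet n δ)
    (q : Multiset ℕ × Multiset ℕ)
    (hq : q = (strip ((part p.2 0 + tauNat n n' δ) ::ₘ mtail p.2), p.1)) :
    (ThetaB n n' δ p q ∧ q.2.sum = p.1.sum) ∧
    ∀ r ∈ BipSet n δ, BLt n n' r p → ¬ ThetaB n n' δ r q := by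
  obtain ⟨hp1, hp2, hpn⟩ := hp
  subst hq
  obtain ⟨m, hm⟩ := id hpar
  have hparity := halfTri_parity n n' δ hδ hpar
  have htau : n + halfTri (deltaPrime n n' δ) ≤ n' + halfTri δ := by
    have h2 : ((n : ℚ) + (halfTri (deltaPrime n n' δ) : ℚ)) ≤ (n' : ℚ) + (halfTri δ : ℚ) := by
      rw [tau] at hτ; linarith
    exact_mod_cast h2
  have hq1sum := q1_sum p.2 (tauNat n n' δ)
  have htN : 2 * tauNat n n' δ + (n + halfTri (deltaPrime n n' δ)) = n' + halfTri δ := by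
    rw [tauNat]; omega
  constructor
  · refine ⟨⟨⟨strip_pos _, hp1, ?_⟩, ?_⟩, rfl⟩
    · show 2 * ((strip ((part p.2 0 + tauNat n n' δ) ::ₘ mtail p.2)).sum + p.1.sum) +
        halfTri (deltaPrime n n' δ) = n'
      rw [hq1sum]
      omega
    · rw [PrecCond, if_pos hpar]
      constructor
      · intro i
        show transpose (strip ((part p.2 0 + tauNat n n' δ) ::ₘ mtail p.2)) i ≤
            transpose p.2 i + 1 ∧
          transpose p.2 i ≤ transpose (strip ((part p.2 0 + tauNat n n' δ) ::ₘ mtail p.2)) i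
        rw [transpose_q1]
        split_ifs <;> omega
      · intro i
        exact ⟨Nat.le_succ _, le_rfl⟩
  · rintro r ⟨hr1, hr2, hrn⟩ hlt ⟨hqB, hprec⟩
    rw [PrecCond, if_pos hpar] at hprec
    obtain ⟨hprec1, hprec2⟩ := hprec
    have hle1 : ∀ j, transpose p.1 j ≤ transpose r.1 j := fun j => (hprec2 j).2
    have hsum1 : p.1.sum ≤ r.1.sum := sum_le_of_transpose_le _ _ hle1
    rw [BLt, if_pos hpar] at hlt
    rcases hlt with h | ⟨hseq, hlex⟩ | ⟨heq1, hlex⟩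
    · omega
    · have heq := eq_of_transpose_le_of_sum_eq p.1 r.1 hp1 hr1 hle1 hseq.symm
      rw [← heq] at hlex
      exact partLexLt_irrefl _ hlex
    · have hseq : r.1.sum = p.1.sum := by rw [heq1]
      have hsum2 : r.2.sum = p.2.sum := by omega
      have hmax : part r.2 0 ≤ part p.2 0 := partLexLt_part0_le hlex
      have hle2 : ∀ j, transpose r.2 j ≤ transpose p.2 j := by
        intro j
        have h1 := (hprec1 j).2
        rw [transpose_q1] at h1
        rcases Nat.lt_or_ge j (part p.2 0) with hj | hj
        · rw [if_neg (by omega)] at h1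
          omega
        · rw [transpose_eq_zero r.2 j
            (fun x hx => le_trans (le_part0 _ _ hx) (le_trans hmax hj))]
          exact Nat.zero_le _
      have heq := eq_of_transpose_le_of_sum_eq r.2 p.2 hr2 hp2 hle2 hsum2
      rw [heq] at hlex
      exact partLexLt_irrefl _ hlex

end PanUnitary
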